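/- arXiv:2305.00188 — 3 statements merged into one kernel-verified Lean document; each statement's English description precedes it below -/
import Mathlib

section
/- For an ILP min{cᵀx : Ax ≤ b, x ∈ ℤⁿ} with some cⱼ ≠ 0 that has a finite optimal solution, the minimum of cᵀx over all integer points of P equals the minimum of cᵀx over all boundary points of P: min_{x ∈ P ∩ ℤⁿ} cᵀx = min_{x ∈ δ(P) ∩ ℤⁿ} cᵀx. -/
open Finset

/-- Membership of a real point in the polyhedron `P = {x | Ax ≤ b}`. -/
def memP (m n : ℕ) (A : Fin m → Fin n → ℝ) (b : Fin m → ℝ) (y : Fin n → ℝ) : Prop :=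
  ∀ i, ∑ l, A i l * y l ≤ b i

/-- `x` is a boundary point of `P`: a feasible integer point having a
neighbor `x ± eⱼ` outside `P`. -/
def boundaryPt (m n : ℕ) (A : Fin m → Fin n → ℝ) (b : Fin m → ℝ) (x : Fin n → ℤ) : Prop :=
  memP m n A b (fun l => (x l : ℝ)) ∧
    ∃ j : Fin n,
      ¬ memP m n A b (fun l => (((x + Pi.single j 1) : Fin n → ℤ) l : ℝ)) ∨
      ¬ memP m n A b (fun l => (((x - Pi.single j 1) : Fin n → ℤ) l : ℝ))

lemma sum_shift {n : ℕ} (c : Fin n → ℝ) (x : Fin n → ℤ) (j : Fin n) :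
    (∀ s : ℤ, ∑ l, c l * (((x + s • Pi.single j 1 : Fin n → ℤ) l : ℝ)) =
      (∑ l, c l * (x l : ℝ)) + s * c j) := by
  intro s
  have : ∀ l, c l * (((x + s • Pi.single j 1 : Fin n → ℤ) l : ℝ)) =
      c l * (x l : ℝ) + c l * ((s • Pi.single j 1 : Fin n → ℤ) l : ℝ) := by
    intro l; push_cast [Pi.add_apply]; ring
  rw [Finset.sum_congr rfl fun l _ => this l, Finset.sum_add_distrib]
  congr 1
  rw [Finset.sum_eq_single j]
  · simp [Pi.single_apply, mul_comm]
  · intro l _ h; simp [Pi.single_apply, h]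
  · simp

/-- If the ILP (with some nonzero objective coefficient) attains a finite
minimum over the integer points of `P`, then the minimum of `cᵀx` over
`P ∩ ℤⁿ` equals the minimum over the boundary points `δ(P) ∩ ℤⁿ`. -/
theorem stmt_3 (m n : ℕ) (A : Fin m → Fin n → ℝ) (b : Fin m → ℝ) (c : Fin n → ℝ)
    (j₀ : Fin n) (hc : c j₀ ≠ 0)
    (xstar : Fin n → ℤ)
    (hmin : IsLeast {v : ℝ | ∃ x : Fin n → ℤ, memP m n A b (fun l => (x l : ℝ)) ∧
      v = ∑ l, c l * (x l : ℝ)} (∑ l, c l * (xstar l : ℝ))) :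
    sInf {v : ℝ | ∃ x : Fin n → ℤ, memP m n A b (fun l => (x l : ℝ)) ∧
        v = ∑ l, c l * (x l : ℝ)} =
    sInf {v : ℝ | ∃ x : Fin n → ℤ, boundaryPt m n A b x ∧
        v = ∑ l, c l * (x l : ℝ)} := by
  obtain ⟨hmem, hlb⟩ := hmin
  obtain ⟨x, hx, hv⟩ := hmem
  set v := ∑ l, c l * (xstar l : ℝ) with hvdef
  -- x is a boundary point
  have hbd : boundaryPt m n A b x := by
    refine ⟨hx, j₀, ?_⟩
    rcases lt_or_gt_of_ne hc with hneg | hpos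
    · left
      intro hmemp
      have h1 : v ≤ ∑ l, c l * (((x + Pi.single j₀ 1 : Fin n → ℤ) l : ℝ)) :=
        hlb ⟨_, hmemp, rfl⟩
      have h2 := sum_shift c x j₀ 1
      rw [one_smul] at h2
      rw [h2, ← hv] at h1
      push_cast at h1
      linarith
    · right
      intro hmemp
      have h1 : v ≤ ∑ l, c l * (((x - Pi.single j₀ 1 : Fin n → ℤ) l : ℝ)) :=
        hlb ⟨_, hmemp, rfl⟩
      have h2 := sum_shift c x j₀ (-1)
      have he : x + (-1 : ℤ) • Pi.single j₀ 1 = x - Pi.single j₀ 1 := by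
        ext l; simp [sub_eq_add_neg]
      rw [he] at h2
      rw [h2, ← hv] at h1
      push_cast at h1
      linarith
  have hleast1 : IsLeast {v : ℝ | ∃ x : Fin n → ℤ, memP m n A b (fun l => (x l : ℝ)) ∧
      v = ∑ l, c l * (x l : ℝ)} v := ⟨⟨x, hx, hv⟩, hlb⟩
  have hleast2 : IsLeast {v : ℝ | ∃ x : Fin n → ℤ, boundaryPt m n A b x ∧
      v = ∑ l, c l * (x l : ℝ)} v := by
    refine ⟨⟨x, hbd, hv⟩, ?_⟩
    rintro w ⟨y, hy, rfl⟩
    exact hlb ⟨y, hy.1, rfl⟩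
  rw [hleast1.csInf_eq, hleast2.csInf_eq]
end

section
/- Let x ∈ P ∩ ℤⁿ be feasible, fix coordinate j with objective coefficient cⱼ < 0, and let x' be obtained from x by the lift move: setting x'ⱼ to the upper bound of the local feasible domain lfd(xⱼ, x) (assumed finite). Then x' ∈ δ(P): x' is feasible and x' + eⱼ ∉ P. -/
open Finset

/-- The local feasible domain `lfd(xⱼ, x)` of coordinate `j` at `x`, as a set
of integer values for `xⱼ`. -/
def lfd (m n : ℕ) (A : Fin m → Fin n → ℝ) (b : Fin m → ℝ)
    (ℓ u : Fin n → ℤ) (x : Fin n → ℤ) (j : Fin n) : Set ℤ :=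
  {t : ℤ | ℓ j ≤ t ∧ t ≤ u j ∧
    (∀ i, 0 < A i j → t ≤ x j + ⌊(b i - ∑ l, A i l * (x l : ℝ)) / A i j⌋) ∧
    (∀ i, A i j < 0 → x j + ⌈(b i - ∑ l, A i l * (x l : ℝ)) / A i j⌉ ≤ t)}

/-- Lift move: if `x` is feasible for `P = {y | Ay ≤ b, ℓ ≤ y ≤ u}`, `cⱼ < 0`,
and `t` is the (finite, attained) upper bound of `lfd(xⱼ, x)`, then the
lift-move result `x' = x[xⱼ := t]` is a boundary point: `x'` is feasible and
`x' + eⱼ ∉ P`. -/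
theorem stmt_10 (m n : ℕ) (A : Fin m → Fin n → ℝ) (b : Fin m → ℝ)
    (ℓ u : Fin n → ℤ) (c : Fin n → ℝ) (x : Fin n → ℤ)
    (hA : ∀ i, ∑ l, A i l * (x l : ℝ) ≤ b i)
    (hl : ∀ l, ℓ l ≤ x l) (hu : ∀ l, x l ≤ u l)
    (j : Fin n) (hcj : c j < 0)
    (t : ℤ) (ht : IsGreatest (lfd m n A b ℓ u x j) t) :
    ((∀ i, ∑ l, A i l * ((Function.update x j t) l : ℝ) ≤ b i) ∧
      (∀ l, ℓ l ≤ (Function.update x j t) l) ∧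
      (∀ l, (Function.update x j t) l ≤ u l)) ∧
    ¬ ((∀ i, ∑ l, A i l * ((Function.update x j (t + 1)) l : ℝ) ≤ b i) ∧
      (∀ l, ℓ l ≤ (Function.update x j (t + 1)) l) ∧
      (∀ l, (Function.update x j (t + 1)) l ≤ u l)) := by
  obtain ⟨⟨hlj, huj, hfl, hce⟩, hmax⟩ := ht
  have key : ∀ (i : Fin m) (v : ℤ), ∑ l, A i l * ((Function.update x j v) l : ℝ)
      = (∑ l, A i l * (x l : ℝ)) + A i j * ((v : ℝ) - (x j : ℝ)) := by
    intro i v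
    rw [← Finset.sum_erase_add _ _ (mem_univ j), ← Finset.sum_erase_add _ _ (mem_univ j)]
    have h1 : ∑ l ∈ univ.erase j, A i l * ((Function.update x j v) l : ℝ)
        = ∑ l ∈ univ.erase j, A i l * (x l : ℝ) :=
      Finset.sum_congr rfl (fun l hl => by
        rw [Function.update_of_ne (Finset.ne_of_mem_erase hl)])
    rw [h1, Function.update_self]
    ring
  constructor
  · refine ⟨fun i => ?_, fun l => ?_, fun l => ?_⟩
    · rw [key i t]
      rcases lt_trichotomy (A i j) 0 with h | h | h
      · have := hce i h
        have hd : (b i - ∑ l, A i l * (x l : ℝ)) / A i j ≤ ((t - x j : ℤ) : ℝ) := by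
          rw [← Int.ceil_le]
          omega
        push_cast at hd
        nlinarith [mul_div_cancel₀ (b i - ∑ l, A i l * (x l : ℝ)) h.ne]
      · rw [h]; simpa using hA i
      · have := hfl i h
        have hd : ((t - x j : ℤ) : ℝ) ≤ (b i - ∑ l, A i l * (x l : ℝ)) / A i j := by
          rw [← Int.le_floor]
          omega
        push_cast at hd
        nlinarith [mul_div_cancel₀ (b i - ∑ l, A i l * (x l : ℝ)) h.ne']
    · rcases eq_or_ne l j with rfl | hne
      · simpa using hlj
      · rw [Function.update_of_ne hne]; exact hl l
    · rcases eq_or_ne l j with rfl | hne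
      · simpa using huj
      · rw [Function.update_of_ne hne]; exact hu l
  · rintro ⟨h1, h2, h3⟩
    have hmem : t + 1 ∈ lfd m n A b ℓ u x j := by
      refine ⟨by omega, by simpa using h3 j, fun i hi => ?_, fun i hi => by
        have := hce i hi; omega⟩
      have := h1 i
      rw [key i (t + 1)] at this
      have hd : ((t + 1 - x j : ℤ) : ℝ) ≤ (b i - ∑ l, A i l * (x l : ℝ)) / A i j := by
        rw [le_div_iff₀ hi]
        push_cast at this ⊢
        nlinarith
      have := Int.le_floor.mpr hd
      omega
    have := hmax hmem
    omega
end

section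
/- Let x ∈ P ∩ ℤⁿ be feasible, j a coordinate, and let U be the upper bound of the local feasible domain lfd(xⱼ, x) (assume it is finite and attained via some constraint i with A_{ij} > 0, i.e., U = xⱼ + ⌊Δᵢ/A_{ij}⌋ ≤ uⱼ where Δᵢ = b_i − A_i·x). Then replacing xⱼ by U keeps all constraints satisfied, and replacing xⱼ by U + 1 violates constraint i. -/
open Finset

/-- If `x` is feasible for `P = {y | Ay ≤ b, ℓ ≤ y ≤ u}` and the upper bound
`U = xⱼ + ⌊Δᵢ/A_{ij}⌋` of the local feasible domain of coordinate `j` is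
attained via constraint `i` with `A_{ij} > 0` (so `U ≤ uⱼ` and `U` is below
the local bound coming from every other constraint with positive coefficient),
then replacing `xⱼ` by `U` keeps all constraints and bounds satisfied, while
replacing `xⱼ` by `U + 1` violates constraint `i`. -/
theorem stmt_19 (m n : ℕ) (A : Fin m → Fin n → ℝ) (b : Fin m → ℝ)
    (ℓ u : Fin n → ℤ) (x : Fin n → ℤ)
    (hA : ∀ i', ∑ l, A i' l * (x l : ℝ) ≤ b i')
    (hl : ∀ l, ℓ l ≤ x l) (hu : ∀ l, x l ≤ u l)
    (j : Fin n) (i : Fin m) (hAij : 0 < A i j)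
    (U : ℤ) (hU : U = x j + ⌊(b i - ∑ l, A i l * (x l : ℝ)) / A i j⌋)
    (hUu : U ≤ u j)
    (hUmin : ∀ i', 0 < A i' j →
      U ≤ x j + ⌊(b i' - ∑ l, A i' l * (x l : ℝ)) / A i' j⌋) :
    ((∀ i', ∑ l, A i' l * ((Function.update x j U) l : ℝ) ≤ b i') ∧
      (∀ l, ℓ l ≤ (Function.update x j U) l) ∧
      (∀ l, (Function.update x j U) l ≤ u l)) ∧
    b i < ∑ l, A i l * ((Function.update x j (U + 1)) l : ℝ) := by
  have key : ∀ (i' : Fin m) (c : ℤ),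
      ∑ l, A i' l * ((Function.update x j c l : ℤ) : ℝ)
        = (∑ l, A i' l * (x l : ℝ)) + A i' j * ((c : ℝ) - (x j : ℝ)) := by
    intro i' c
    have h1 : ∑ l ∈ Finset.univ.erase j, A i' l * ((Function.update x j c l : ℤ) : ℝ)
        = ∑ l ∈ Finset.univ.erase j, A i' l * (x l : ℝ) :=
      Finset.sum_congr rfl fun l hl => by
        rw [Function.update_of_ne (Finset.ne_of_mem_erase hl)]
    rw [← Finset.add_sum_erase _ _ (mem_univ j),
        ← Finset.add_sum_erase _ (fun l => A i' l * (x l : ℝ)) (mem_univ j),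
        h1, Function.update_self]
    ring
  have hxU : x j ≤ U := by
    rw [hU]
    have : (0:ℤ) ≤ ⌊(b i - ∑ l, A i l * (x l : ℝ)) / A i j⌋ := by
      apply Int.floor_nonneg.2
      apply div_nonneg _ hAij.le
      linarith [hA i]
    omega
  refine ⟨⟨?_, ?_, ?_⟩, ?_⟩
  · intro i'
    rw [key i' U]
    rcases lt_trichotomy (A i' j) 0 with h | h | h
    · have : A i' j * ((U : ℝ) - (x j : ℝ)) ≤ 0 := by
        apply mul_nonpos_of_nonpos_of_nonneg h.le
        have : ((x j : ℤ) : ℝ) ≤ (U : ℝ) := Int.cast_le.2 hxU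
        linarith
      linarith [hA i']
    · rw [h]; simp; linarith [hA i']
    · have h2 := hUmin i' h
      have h3 : ((U : ℝ) - (x j : ℝ)) ≤ (b i' - ∑ l, A i' l * (x l : ℝ)) / A i' j := by
        calc ((U : ℝ) - (x j : ℝ)) = ((U - x j : ℤ) : ℝ) := by push_cast; ring
        _ ≤ (⌊(b i' - ∑ l, A i' l * (x l : ℝ)) / A i' j⌋ : ℝ) := by
              exact_mod_cast (by omega : U - x j ≤ ⌊(b i' - ∑ l, A i' l * (x l : ℝ)) / A i' j⌋)
        _ ≤ _ := Int.floor_le _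
      have := (le_div_iff₀ h).1 h3
      linarith
  · intro l
    rcases eq_or_ne l j with rfl | h
    · rw [Function.update_self]; exact le_trans (hl l) hxU
    · rw [Function.update_of_ne h]; exact hl l
  · intro l
    rcases eq_or_ne l j with rfl | h
    · rw [Function.update_self]; exact hUu
    · rw [Function.update_of_ne h]; exact hu l
  · rw [key i (U + 1)]
    have h3 : (b i - ∑ l, A i l * (x l : ℝ)) / A i j < ((U : ℝ) + 1 - (x j : ℝ)) := by
      have := Int.lt_floor_add_one ((b i - ∑ l, A i l * (x l : ℝ)) / A i j)
      have hc : ((U : ℝ) + 1 - (x j : ℝ)) = (⌊(b i - ∑ l, A i l * (x l : ℝ)) / A i j⌋ : ℝ) + 1 := by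
        have : ((U : ℤ) : ℝ) = ((x j : ℤ) : ℝ) + ((⌊(b i - ∑ l, A i l * (x l : ℝ)) / A i j⌋ : ℤ) : ℝ) := by
          exact_mod_cast congrArg (fun z : ℤ => (z : ℝ)) hU
        linarith
      linarith
    have := (div_lt_iff₀ hAij).1 h3
    push_cast
    linarith
end
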